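/- (DMIX satisfies DIGM) Let K be a positive integer, let U_1, ..., U_K be finite nonempty action sets with joint action space U = U_1 × ... × U_K, and let (Ω, P) be a probability space. For each k and u_k ∈ U_k let Z_k(u_k) : Ω → ℝ be integrable, and set Q_k(u_k) = E[Z_k(u_k)]. Let M : ℝ^K → ℝ be nondecreasing in each coordinate, and define for each joint action u the random variable Z_jt(u) = M(Q_1(u_1), ..., Q_K(u_K)) + Σ_{k=1}^K ( Z_k(u_k) − Q_k(u_k) ). Then any joint action u* whose components u_k* each maximize Q_k over U_k maximizes u ↦ E[Z_jt(u)] over U. -/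

import Mathlib

open MeasureTheory

/-- DMIX satisfies the DIGM greedy-action condition: with `Q k u_k = E[Z k u_k]`, a
monotonic mixing function `M`, and
`Zjt u = M (Q 1 (u 1), ..., Q K (u K)) + ∑ k (Z k (u k) - Q k (u k))`,
any joint action whose components individually maximize the expected utilities
maximizes `u ↦ E[Zjt u]`. -/
theorem dmix_digm_greedy {K : ℕ} (hK : 0 < K) (U : Fin K → Type*)
    [∀ k, Fintype (U k)] [∀ k, Nonempty (U k)]
    {Ω : Type*} [MeasurableSpace Ω] (P : Measure Ω) [IsProbabilityMeasure P]
    (Z : ∀ k, U k → Ω → ℝ)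
    (hZ : ∀ k (uk : U k), Integrable (Z k uk) P)
    (Q : ∀ k, U k → ℝ)
    (hQ : ∀ k (uk : U k), Q k uk = ∫ ω, Z k uk ω ∂P)
    (M : (Fin K → ℝ) → ℝ)
    (hM : ∀ x y : Fin K → ℝ, (∀ k, x k ≤ y k) → M x ≤ M y)
    (Zjt : (∀ k, U k) → Ω → ℝ)
    (hZjt : ∀ (u : ∀ k, U k) (ω : Ω),
      Zjt u ω = M (fun k => Q k (u k)) + ∑ k, (Z k (u k) ω - Q k (u k)))
    (ustar : ∀ k, U k)
    (hstar : ∀ k, ∀ vk : U k, Q k vk ≤ Q k (ustar k)) :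
    ∀ v : ∀ k, U k, (∫ ω, Zjt v ω ∂P) ≤ ∫ ω, Zjt ustar ω ∂P := by
  have key : ∀ u : ∀ k, U k, (∫ ω, Zjt u ω ∂P) = M (fun k => Q k (u k)) := by
    intro u
    have heq : (fun ω => Zjt u ω) =
        (fun ω => M (fun k => Q k (u k)) + ∑ k, (Z k (u k) ω - Q k (u k))) := by
      funext ω; exact hZjt u ω
    rw [heq]
    have hg : Integrable (fun ω => ∑ k, (Z k (u k) ω - Q k (u k))) P :=
      integrable_finset_sum _ (fun k _ => (hZ k (u k)).sub (integrable_const _))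
    rw [integral_add (integrable_const _) hg]
    have hsum : (∫ a, ∑ k, (Z k (u k) a - Q k (u k)) ∂P)
        = ∑ k, ∫ a, (Z k (u k) a - Q k (u k)) ∂P :=
      integral_finset_sum _ (fun k _ => (hZ k (u k)).sub (integrable_const _))
    rw [integral_const, probReal_univ, one_smul, hsum]
    have : ∀ k : Fin K, (∫ ω, (Z k (u k) ω - Q k (u k)) ∂P) = 0 := by
      intro k
      rw [integral_sub (hZ k (u k)) (integrable_const _), integral_const,
        probReal_univ, one_smul, hQ, sub_self]
    simp [this]
  intro v
  rw [key v, key ustar]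
  exact hM _ _ (fun k => hstar k (v k))
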